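/- Let A be the 6×6 block matrix of the reduced cell-centered Stokes–Biot system (as assembled in the paper), whose quadratic form on a vector q = (w_p, ψ, φ, ξ, v_f, v_s) decomposes as qᵗ A q = w_pᵗ(A_{pp} − A_{σp}A_{σσ}^{-1}A_{σp}ᵗ)w_p + w_pᵗ A_{pγ}A_{γγ}^{-1}A_{pγ}ᵗ w_p + (A_{up}ᵗ w_p + A_{uλ}ᵗ ξ)ᵗ A_{uu}^{-1}(A_{up}ᵗ w_p + A_{uλ}ᵗ ξ) + (ψᵗ φᵗ) C (ψ;φ) + two Schur-complement quadratic terms in (ψ, v_f) and (φ, v_s). If (a) A_{uu}, A_{σσ}, A_{γγ} are symmetric positive definite; (b) the matrix [[A_{σσ}, A_{σp}ᵗ],[A_{σp}, A_{pp}]] is positive semidefinite; (c) C is positive semidefinite; (d) the map (w_p, ξ) ↦ A_{up}ᵗ w_p + A_{uλ}ᵗ ξ is injective; and (e) the maps (ψ, v_f, χ_f) ↦ A_{σφ}ᵗψ + A_{σu}ᵗ v_f + A_{σγ}ᵗ χ_f and its poroelastic analogue are injective; then A is positive definite. -/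

import Mathlib

open Matrix

/-- Schur-complement quadratic form in `(ψ, v)` obtained after eliminating the
third (vorticity/rotation) variable from the 3×3 block matrix whose blocks are
`X * W * Yᵀ` for `X, Y ∈ {P, U, G}`. -/
noncomputable def schurQuad {a b c s : ℕ}
    (W : Matrix (Fin s) (Fin s) ℝ)
    (P : Matrix (Fin a) (Fin s) ℝ) (U : Matrix (Fin b) (Fin s) ℝ)
    (G : Matrix (Fin c) (Fin s) ℝ)
    (ψ : Fin a → ℝ) (v : Fin b → ℝ) : ℝ :=
  ψ ⬝ᵥ ((P * W * Pᵀ - P * W * Gᵀ * (G * W * Gᵀ)⁻¹ * (G * W * Pᵀ)) *ᵥ ψ)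
    + 2 * (ψ ⬝ᵥ ((P * W * Uᵀ - P * W * Gᵀ * (G * W * Gᵀ)⁻¹ * (G * W * Uᵀ)) *ᵥ v))
    + v ⬝ᵥ ((U * W * Uᵀ - U * W * Gᵀ * (G * W * Gᵀ)⁻¹ * (G * W * Uᵀ)) *ᵥ v)

lemma dot_tmul {m n : ℕ} (M : Matrix (Fin m) (Fin n) ℝ) (x : Fin m → ℝ) (y : Fin n → ℝ) :
    x ⬝ᵥ (M *ᵥ y) = (Mᵀ *ᵥ x) ⬝ᵥ y := by
  rw [dotProduct_mulVec, mulVec_transpose]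

lemma dot_sym {n : ℕ} {W : Matrix (Fin n) (Fin n) ℝ} (hW : Wᵀ = W) (x y : Fin n → ℝ) :
    x ⬝ᵥ (W *ᵥ y) = y ⬝ᵥ (W *ᵥ x) := by
  rw [dot_tmul, hW, dotProduct_comm]

lemma psd_nonneg {n : Type*} [Fintype n] {M : Matrix n n ℝ} (h : M.PosSemidef) (x : n → ℝ) :
    0 ≤ x ⬝ᵥ (M *ᵥ x) := by simpa using h.dotProduct_mulVec_nonneg x

lemma pd_pos {n : Type*} [Fintype n] {M : Matrix n n ℝ} (h : M.PosDef) {x : n → ℝ}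
    (hx : x ≠ 0) : 0 < x ⬝ᵥ (M *ᵥ x) := by simpa using h.dotProduct_mulVec_pos hx

lemma schurQuad_eq {a b c s : ℕ}
    (W : Matrix (Fin s) (Fin s) ℝ)
    (P : Matrix (Fin a) (Fin s) ℝ) (U : Matrix (Fin b) (Fin s) ℝ)
    (G : Matrix (Fin c) (Fin s) ℝ)
    (hW : Wᵀ = W) (hD : (G * W * Gᵀ) * (G * W * Gᵀ)⁻¹ = 1)
    (ψ : Fin a → ℝ) (v : Fin b → ℝ) :
    schurQuad W P U G ψ v =
      ((Pᵀ *ᵥ ψ + Uᵀ *ᵥ v) - Gᵀ *ᵥ ((G * W * Gᵀ)⁻¹ *ᵥ (G *ᵥ (W *ᵥ (Pᵀ *ᵥ ψ + Uᵀ *ᵥ v))))) ⬝ᵥ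
        (W *ᵥ ((Pᵀ *ᵥ ψ + Uᵀ *ᵥ v) -
          Gᵀ *ᵥ ((G * W * Gᵀ)⁻¹ *ᵥ (G *ᵥ (W *ᵥ (Pᵀ *ᵥ ψ + Uᵀ *ᵥ v)))))) := by
  have hDsym : (G * W * Gᵀ)ᵀ = G * W * Gᵀ := by
    simp [transpose_mul, hW, Matrix.mul_assoc]
  have hDinvsym : ((G * W * Gᵀ)⁻¹)ᵀ = (G * W * Gᵀ)⁻¹ := by
    rw [transpose_nonsing_inv, hDsym]
  have key : ∀ x : Fin c → ℝ,
      G *ᵥ (W *ᵥ (Gᵀ *ᵥ ((G * W * Gᵀ)⁻¹ *ᵥ x))) = x := by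
    intro x
    simp only [mulVec_mulVec, ← Matrix.mul_assoc]
    rw [hD, one_mulVec]
  set u : Fin s → ℝ := Pᵀ *ᵥ ψ + Uᵀ *ᵥ v with hu
  set g : Fin c → ℝ := G *ᵥ (W *ᵥ u) with hg
  set χ : Fin c → ℝ := (G * W * Gᵀ)⁻¹ *ᵥ g with hχ
  have h1 : u ⬝ᵥ (W *ᵥ (Gᵀ *ᵥ χ)) = χ ⬝ᵥ g := by
    rw [dot_sym hW, ← dot_tmul G χ, hg]
  have h3 : (Gᵀ *ᵥ χ) ⬝ᵥ (W *ᵥ (Gᵀ *ᵥ χ)) = χ ⬝ᵥ g := by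
    conv_lhs => rw [← dot_tmul G χ, hχ, key g]
  have hRHS : (u - Gᵀ *ᵥ χ) ⬝ᵥ (W *ᵥ (u - Gᵀ *ᵥ χ)) = u ⬝ᵥ (W *ᵥ u) - χ ⬝ᵥ g := by
    simp only [mulVec_sub, dotProduct_sub, sub_dotProduct]
    rw [h1, h3, dot_sym hW (Gᵀ *ᵥ χ) u, h1]
    ring
  have hP : ∀ y : Fin s → ℝ, (Pᵀ *ᵥ ψ) ⬝ᵥ y = ψ ⬝ᵥ (P *ᵥ y) := fun y => (dot_tmul P ψ y).symm
  have hU : ∀ y : Fin s → ℝ, (Uᵀ *ᵥ v) ⬝ᵥ y = v ⬝ᵥ (U *ᵥ y) := fun y => (dot_tmul U v y).symm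
  have huWu : u ⬝ᵥ (W *ᵥ u) =
      ψ ⬝ᵥ ((P * W * Pᵀ) *ᵥ ψ) + 2 * (ψ ⬝ᵥ ((P * W * Uᵀ) *ᵥ v)) + v ⬝ᵥ ((U * W * Uᵀ) *ᵥ v) := by
    rw [hu]
    simp only [mulVec_add, dotProduct_add, add_dotProduct]
    rw [dot_sym hW (Uᵀ *ᵥ v) (Pᵀ *ᵥ ψ)]
    simp only [hP, hU, mulVec_mulVec, ← Matrix.mul_assoc]
    ring
  have hg12 : g = (G * W * Pᵀ) *ᵥ ψ + (G * W * Uᵀ) *ᵥ v := by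
    rw [hg, hu]
    simp only [mulVec_add, mulVec_mulVec, ← Matrix.mul_assoc]
  have hgP : ∀ y, ((G * W * Pᵀ) *ᵥ ψ) ⬝ᵥ y = ψ ⬝ᵥ ((P * W * Gᵀ) *ᵥ y) := by
    intro y
    rw [dot_tmul (P * W * Gᵀ) ψ y]
    congr 2
    rw [transpose_mul, transpose_mul, transpose_transpose, hW, Matrix.mul_assoc]
  have hgU : ∀ y, ((G * W * Uᵀ) *ᵥ v) ⬝ᵥ y = v ⬝ᵥ ((U * W * Gᵀ) *ᵥ y) := by
    intro y
    rw [dot_tmul (U * W * Gᵀ) v y]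
    congr 2
    rw [transpose_mul, transpose_mul, transpose_transpose, hW, Matrix.mul_assoc]
  have hχg : χ ⬝ᵥ g =
      ψ ⬝ᵥ ((P * W * Gᵀ * (G * W * Gᵀ)⁻¹ * (G * W * Pᵀ)) *ᵥ ψ)
      + 2 * (ψ ⬝ᵥ ((P * W * Gᵀ * (G * W * Gᵀ)⁻¹ * (G * W * Uᵀ)) *ᵥ v))
      + v ⬝ᵥ ((U * W * Gᵀ * (G * W * Gᵀ)⁻¹ * (G * W * Uᵀ)) *ᵥ v) := by
    rw [hχ, dotProduct_comm]
    rw [hg12]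
    simp only [mulVec_add, dotProduct_add, add_dotProduct]
    rw [dot_sym hDinvsym ((G * W * Uᵀ) *ᵥ v) ((G * W * Pᵀ) *ᵥ ψ)]
    simp only [hgP, hgU, mulVec_mulVec, ← Matrix.mul_assoc]
    ring
  rw [hRHS, huWu, hχg]
  unfold schurQuad
  simp only [sub_mulVec, dotProduct_sub]
  ring


theorem stmt_18
    -- dimensions of the visible blocks (Darcy pressure, trace ψ, trace φ,
    -- trace ξ = λ, Stokes velocity, structure velocity)
    (np nψ nφ nξ nvf nvs : ℕ)
    -- dimensions of the eliminated blocks (Stokes stress, poroelastic stress,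
    -- Darcy velocity, vorticity, rotation)
    (nsf nsp nup ngf ngp : ℕ)
    -- the reduced cell-centered matrix
    (A : Matrix (Fin np ⊕ Fin nψ ⊕ Fin nφ ⊕ Fin nξ ⊕ Fin nvf ⊕ Fin nvs)
         (Fin np ⊕ Fin nψ ⊕ Fin nφ ⊕ Fin nξ ⊕ Fin nvf ⊕ Fin nvs) ℝ)
    -- the blocks appearing in the decomposition of the quadratic form
    (App : Matrix (Fin np) (Fin np) ℝ) (Aσp : Matrix (Fin np) (Fin nsp) ℝ)
    (Aσσp : Matrix (Fin nsp) (Fin nsp) ℝ)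
    (Apγ : Matrix (Fin np) (Fin ngp) ℝ)
    (Aup : Matrix (Fin np) (Fin nup) ℝ) (Aulam : Matrix (Fin nξ) (Fin nup) ℝ)
    (Auu : Matrix (Fin nup) (Fin nup) ℝ)
    (Cm : Matrix (Fin nψ ⊕ Fin nφ) (Fin nψ ⊕ Fin nφ) ℝ)
    (Aσφ : Matrix (Fin nψ) (Fin nsf) ℝ) (Aσuf : Matrix (Fin nvf) (Fin nsf) ℝ)
    (Aσγf : Matrix (Fin ngf) (Fin nsf) ℝ) (Aσσf : Matrix (Fin nsf) (Fin nsf) ℝ)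
    (Aσθ : Matrix (Fin nφ) (Fin nsp) ℝ) (Aσus : Matrix (Fin nvs) (Fin nsp) ℝ)
    (Aσγp : Matrix (Fin ngp) (Fin nsp) ℝ)
    -- (a) A_uu, A_σσ and A_γγ are symmetric positive definite
    (hAuu : Auu.PosDef) (hAσσf : Aσσf.PosDef) (hAσσp : Aσσp.PosDef)
    (hAγγf : (Aσγf * Aσσf⁻¹ * Aσγfᵀ).PosDef)
    (hAγγp : (Aσγp * Aσσp⁻¹ * Aσγpᵀ).PosDef)
    -- (b) the matrix [[A_σσ, A_σpᵀ],[A_σp, A_pp]] is positive semidefinite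
    (hb : (Matrix.fromBlocks Aσσp Aσpᵀ Aσp App).PosSemidef)
    -- (c) C is positive semidefinite
    (hc : Cm.PosSemidef)
    -- (d) (w_p, ξ) ↦ A_upᵀ w_p + A_uλᵀ ξ is injective
    (hd : Function.Injective fun wξ : (Fin np → ℝ) × (Fin nξ → ℝ) =>
      Aupᵀ *ᵥ wξ.1 + Aulamᵀ *ᵥ wξ.2)
    -- (e) the maps (ψ, v_f, χ_f) ↦ A_σφᵀψ + A_σuᵀv_f + A_σγᵀχ_f and its
    -- poroelastic analogue are injective
    (hef : Function.Injective fun t : (Fin nψ → ℝ) × (Fin nvf → ℝ) × (Fin ngf → ℝ) =>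
      Aσφᵀ *ᵥ t.1 + Aσufᵀ *ᵥ t.2.1 + Aσγfᵀ *ᵥ t.2.2)
    (hep : Function.Injective fun t : (Fin nφ → ℝ) × (Fin nvs → ℝ) × (Fin ngp → ℝ) =>
      Aσθᵀ *ᵥ t.1 + Aσusᵀ *ᵥ t.2.1 + Aσγpᵀ *ᵥ t.2.2)
    -- the decomposition of the quadratic form of A
    (hdecomp : ∀ (w : Fin np → ℝ) (ψ : Fin nψ → ℝ) (φ : Fin nφ → ℝ)
        (ξ : Fin nξ → ℝ) (vf : Fin nvf → ℝ) (vs : Fin nvs → ℝ),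
      (Sum.elim w (Sum.elim ψ (Sum.elim φ (Sum.elim ξ (Sum.elim vf vs))))) ⬝ᵥ
        (A *ᵥ Sum.elim w (Sum.elim ψ (Sum.elim φ (Sum.elim ξ (Sum.elim vf vs)))))
      = w ⬝ᵥ ((App - Aσp * Aσσp⁻¹ * Aσpᵀ) *ᵥ w)
        + w ⬝ᵥ ((Apγ * (Aσγp * Aσσp⁻¹ * Aσγpᵀ)⁻¹ * Apγᵀ) *ᵥ w)
        + (Aupᵀ *ᵥ w + Aulamᵀ *ᵥ ξ) ⬝ᵥ (Auu⁻¹ *ᵥ (Aupᵀ *ᵥ w + Aulamᵀ *ᵥ ξ))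
        + (Sum.elim ψ φ) ⬝ᵥ (Cm *ᵥ Sum.elim ψ φ)
        + schurQuad Aσσf⁻¹ Aσφ Aσuf Aσγf ψ vf
        + schurQuad Aσσp⁻¹ Aσθ Aσus Aσγp φ vs) :
    -- A is positive definite
    ∀ q : Fin np ⊕ Fin nψ ⊕ Fin nφ ⊕ Fin nξ ⊕ Fin nvf ⊕ Fin nvs → ℝ,
      q ≠ 0 → 0 < q ⬝ᵥ (A *ᵥ q) := by
  intro q hq
  set w : Fin np → ℝ := fun i => q (Sum.inl i) with hw
  set ψ : Fin nψ → ℝ := fun i => q (Sum.inr (Sum.inl i)) with hψ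
  set φ : Fin nφ → ℝ := fun i => q (Sum.inr (Sum.inr (Sum.inl i))) with hφ
  set ξ : Fin nξ → ℝ := fun i => q (Sum.inr (Sum.inr (Sum.inr (Sum.inl i)))) with hξ
  set vf : Fin nvf → ℝ := fun i => q (Sum.inr (Sum.inr (Sum.inr (Sum.inr (Sum.inl i))))) with hvf
  set vs : Fin nvs → ℝ := fun i => q (Sum.inr (Sum.inr (Sum.inr (Sum.inr (Sum.inr i))))) with hvs
  have hqe : q = Sum.elim w (Sum.elim ψ (Sum.elim φ (Sum.elim ξ (Sum.elim vf vs)))) := by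
    funext x
    rcases x with x | x | x | x | x | x <;> rfl
  -- symmetry and invertibility facts
  have hWfT : (Aσσf⁻¹)ᵀ = Aσσf⁻¹ := by
    rw [transpose_nonsing_inv]
    congr 1
    rw [← Matrix.conjTranspose_eq_transpose_of_trivial]
    exact hAσσf.1
  have hWpT : (Aσσp⁻¹)ᵀ = Aσσp⁻¹ := by
    rw [transpose_nonsing_inv]
    congr 1
    rw [← Matrix.conjTranspose_eq_transpose_of_trivial]
    exact hAσσp.1
  have hDf : (Aσγf * Aσσf⁻¹ * Aσγfᵀ) * (Aσγf * Aσσf⁻¹ * Aσγfᵀ)⁻¹ = 1 :=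
    Matrix.mul_nonsing_inv _ hAγγf.det_pos.ne'.isUnit
  have hDp : (Aσγp * Aσσp⁻¹ * Aσγpᵀ) * (Aσγp * Aσσp⁻¹ * Aσγpᵀ)⁻¹ = 1 :=
    Matrix.mul_nonsing_inv _ hAγγp.det_pos.ne'.isUnit
  -- term 1 is the Schur complement of a PSD matrix
  have hSchur : (App - Aσp * Aσσp⁻¹ * Aσpᵀ).PosSemidef := by
    letI := hAσσp.isUnit.invertible
    have h := (Matrix.PosDef.fromBlocks₁₁ (A := Aσσp) Aσpᵀ App hAσσp).mp
      (by simpa [Matrix.conjTranspose_eq_transpose_of_trivial] using hb)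
    simpa [Matrix.conjTranspose_eq_transpose_of_trivial] using h
  -- term 2
  have hT2 : (Apγ * (Aσγp * Aσσp⁻¹ * Aσγpᵀ)⁻¹ * Apγᵀ).PosSemidef := by
    have h := (hAγγp.inv.posSemidef).mul_mul_conjTranspose_same Apγ
    simpa [Matrix.conjTranspose_eq_transpose_of_trivial] using h
  rw [hqe, hdecomp w ψ φ ξ vf vs,
    schurQuad_eq Aσσf⁻¹ Aσφ Aσuf Aσγf hWfT hDf ψ vf,
    schurQuad_eq Aσσp⁻¹ Aσθ Aσus Aσγp hWpT hDp φ vs]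
  set x3 : Fin nup → ℝ := Aupᵀ *ᵥ w + Aulamᵀ *ᵥ ξ with hx3def
  set zf : Fin nsf → ℝ :=
    (Aσφᵀ *ᵥ ψ + Aσufᵀ *ᵥ vf) - Aσγfᵀ *ᵥ ((Aσγf * Aσσf⁻¹ * Aσγfᵀ)⁻¹ *ᵥ
      (Aσγf *ᵥ (Aσσf⁻¹ *ᵥ (Aσφᵀ *ᵥ ψ + Aσufᵀ *ᵥ vf)))) with hzfdef
  set zp : Fin nsp → ℝ :=
    (Aσθᵀ *ᵥ φ + Aσusᵀ *ᵥ vs) - Aσγpᵀ *ᵥ ((Aσγp * Aσσp⁻¹ * Aσγpᵀ)⁻¹ *ᵥ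
      (Aσγp *ᵥ (Aσσp⁻¹ *ᵥ (Aσθᵀ *ᵥ φ + Aσusᵀ *ᵥ vs)))) with hzpdef
  have n1 : 0 ≤ w ⬝ᵥ ((App - Aσp * Aσσp⁻¹ * Aσpᵀ) *ᵥ w) := psd_nonneg hSchur w
  have n2 : 0 ≤ w ⬝ᵥ ((Apγ * (Aσγp * Aσσp⁻¹ * Aσγpᵀ)⁻¹ * Apγᵀ) *ᵥ w) := psd_nonneg hT2 w
  have n3 : 0 ≤ x3 ⬝ᵥ (Auu⁻¹ *ᵥ x3) := psd_nonneg hAuu.inv.posSemidef x3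
  have n4 : 0 ≤ (Sum.elim ψ φ) ⬝ᵥ (Cm *ᵥ Sum.elim ψ φ) := psd_nonneg hc _
  have n5 : 0 ≤ zf ⬝ᵥ (Aσσf⁻¹ *ᵥ zf) := psd_nonneg hAσσf.inv.posSemidef zf
  have n6 : 0 ≤ zp ⬝ᵥ (Aσσp⁻¹ *ᵥ zp) := psd_nonneg hAσσp.inv.posSemidef zp
  by_cases hwz : w = 0 ∧ ξ = 0
  · by_cases hψz : ψ = 0 ∧ vf = 0
    · by_cases hφz : φ = 0 ∧ vs = 0
      · exfalso
        apply hq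
        rw [hqe, hwz.1, hwz.2, hψz.1, hψz.2, hφz.1, hφz.2]
        funext x
        rcases x with x | x | x | x | x | x <;> rfl
      · -- poroelastic Schur term is positive
        have hzp : zp ≠ 0 := by
          intro h0
          have hmap : Aσθᵀ *ᵥ φ + Aσusᵀ *ᵥ vs + Aσγpᵀ *ᵥ
              (-((Aσγp * Aσσp⁻¹ * Aσγpᵀ)⁻¹ *ᵥ
                (Aσγp *ᵥ (Aσσp⁻¹ *ᵥ (Aσθᵀ *ᵥ φ + Aσusᵀ *ᵥ vs))))) = zp := by
            rw [hzpdef, sub_eq_add_neg]; simp [Matrix.mulVec_neg]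
          have h2 : (φ, vs, -((Aσγp * Aσσp⁻¹ * Aσγpᵀ)⁻¹ *ᵥ
              (Aσγp *ᵥ (Aσσp⁻¹ *ᵥ (Aσθᵀ *ᵥ φ + Aσusᵀ *ᵥ vs)))))
              = ((0 : Fin nφ → ℝ), (0 : Fin nvs → ℝ), (0 : Fin ngp → ℝ)) := by
            apply hep
            simp only
            rw [hmap, h0]
            simp
          rw [Prod.mk.injEq, Prod.mk.injEq] at h2
          exact hφz ⟨h2.1, h2.2.1⟩
        have p6 : 0 < zp ⬝ᵥ (Aσσp⁻¹ *ᵥ zp) := pd_pos hAσσp.inv hzp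
        linarith
    · -- fluid Schur term is positive
      have hzf : zf ≠ 0 := by
        intro h0
        have hmap : Aσφᵀ *ᵥ ψ + Aσufᵀ *ᵥ vf + Aσγfᵀ *ᵥ
            (-((Aσγf * Aσσf⁻¹ * Aσγfᵀ)⁻¹ *ᵥ
              (Aσγf *ᵥ (Aσσf⁻¹ *ᵥ (Aσφᵀ *ᵥ ψ + Aσufᵀ *ᵥ vf))))) = zf := by
          rw [hzfdef, sub_eq_add_neg]; simp [Matrix.mulVec_neg]
        have h2 : (ψ, vf, -((Aσγf * Aσσf⁻¹ * Aσγfᵀ)⁻¹ *ᵥ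
            (Aσγf *ᵥ (Aσσf⁻¹ *ᵥ (Aσφᵀ *ᵥ ψ + Aσufᵀ *ᵥ vf)))))
            = ((0 : Fin nψ → ℝ), (0 : Fin nvf → ℝ), (0 : Fin ngf → ℝ)) := by
          apply hef
          simp only
          rw [hmap, h0]
          simp
        rw [Prod.mk.injEq, Prod.mk.injEq] at h2
        exact hψz ⟨h2.1, h2.2.1⟩
      have p5 : 0 < zf ⬝ᵥ (Aσσf⁻¹ *ᵥ zf) := pd_pos hAσσf.inv hzf
      linarith
  · -- velocity term is positive
    have hx3 : x3 ≠ 0 := by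
      intro h0
      have h2 : ((w, ξ) : (Fin np → ℝ) × (Fin nξ → ℝ)) = (0, 0) := by
        apply hd
        simp only
        rw [← hx3def, h0]
        simp
      rw [Prod.mk.injEq] at h2
      exact hwz ⟨h2.1, h2.2⟩
    have p3 : 0 < x3 ⬝ᵥ (Auu⁻¹ *ᵥ x3) := pd_pos hAuu.inv hx3
    linarith
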